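/- Applicative bisimilarity is sound with respect to contextual equivalence in λ_S: if t0 ≈ t1 then t0 ≡C t1. -/

import Mathlib

namespace LamS

/-- Terms of the λ-calculus with shift and reset, in de Bruijn representation.
    `lam` and `shift` bind variable 0. -/
inductive Tm : Type
  | var : ℕ → Tm
  | lam : Tm → Tm
  | app : Tm → Tm → Tm
  | shift : Tm → Tm
  | reset : Tm → Tm
  deriving DecidableEq

open Tm

/-- Lift (shift up) free de Bruijn indices `≥ c` by `d`. -/
def liftT (d : ℕ) : ℕ → Tm → Tm
  | c, var n => if n < c then var n else var (n + d)
  | c, lam t => lam (liftT d (c+1) t)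
  | c, app a b => app (liftT d c a) (liftT d c b)
  | c, shift t => shift (liftT d (c+1) t)
  | c, reset t => reset (liftT d c t)

/-- Capture-avoiding substitution `t[j := s]` (de Bruijn). -/
def substT : ℕ → Tm → Tm → Tm
  | j, s, var n => if n = j then liftT j 0 s else if j < n then var (n-1) else var n
  | j, s, lam t => lam (substT (j+1) s t)
  | j, s, app a b => app (substT j s a) (substT j s b)
  | j, s, shift t => shift (substT (j+1) s t)
  | j, s, reset t => reset (substT j s t)

/-- Values are λ-abstractions. -/
def IsValue (t : Tm) : Prop := ∃ b, t = lam b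

/-- All free variables are `< n`. -/
def ClosedUnder : ℕ → Tm → Prop
  | n, var m => m < n
  | n, lam t => ClosedUnder (n+1) t
  | n, app a b => ClosedUnder n a ∧ ClosedUnder n b
  | n, shift t => ClosedUnder (n+1) t
  | n, reset t => ClosedUnder n t

def Closed (t : Tm) : Prop := ClosedUnder 0 t

/-- Pure evaluation contexts, interpreted inside-out:
    `appV b E` is `E[(λ.b) []]` and `appL E t` is `E[[] t]`. -/
inductive PCtx : Type
  | hole : PCtx
  | appV : Tm → PCtx → PCtx
  | appL : PCtx → Tm → PCtx
  deriving DecidableEq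

def PCtx.plug : PCtx → Tm → Tm
  | .hole, t => t
  | .appV b E, t => E.plug (app (lam b) t)
  | .appL E s, t => E.plug (app t s)

def PCtx.liftC (d : ℕ) : ℕ → PCtx → PCtx
  | _, .hole => .hole
  | c, .appV b E => .appV (liftT d (c+1) b) (PCtx.liftC d c E)
  | c, .appL E s => .appL (PCtx.liftC d c E) (liftT d c s)

/-- Composition of pure contexts: `(E.comp E').plug t = E.plug (E'.plug t)`. -/
def PCtx.comp : PCtx → PCtx → PCtx
  | E, .hole => E
  | E, .appV b E' => .appV b (E.comp E')
  | E, .appL E' s => .appL (E.comp E') s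

/-- The captured delimited continuation `λx.⟨E[x]⟩`. -/
def contOf (E : PCtx) : Tm := lam (reset ((PCtx.liftC 1 0 E).plug (var 0)))

/-- Call-by-value evaluation contexts, interpreted inside-out. -/
inductive ECtx : Type
  | hole : ECtx
  | appV : Tm → ECtx → ECtx
  | appL : ECtx → Tm → ECtx
  | resetC : ECtx → ECtx
  deriving DecidableEq

def ECtx.plug : ECtx → Tm → Tm
  | .hole, t => t
  | .appV b F, t => F.plug (app (lam b) t)
  | .appL F s, t => F.plug (app t s)
  | .resetC F, t => F.plug (reset t)

def ClosedECtx : ECtx → Prop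
  | .hole => True
  | .appV b F => ClosedUnder 1 b ∧ ClosedECtx F
  | .appL F s => ClosedECtx F ∧ Closed s
  | .resetC F => ClosedECtx F

/-- One-step reduction of λ_S. -/
inductive Red : Tm → Tm → Prop
  | beta (F : ECtx) (t v : Tm) (hv : IsValue v) :
      Red (F.plug (app (lam t) v)) (F.plug (substT 0 v t))
  | cap (F : ECtx) (E : PCtx) (t : Tm) :
      Red (F.plug (reset (E.plug (shift t)))) (F.plug (reset (substT 0 (contOf E) t)))
  | res (F : ECtx) (v : Tm) (hv : IsValue v) :
      Red (F.plug (reset v)) (F.plug v)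

def RedStar : Tm → Tm → Prop := Relation.ReflTransGen Red

/-- A term is stuck if it is not a value and cannot reduce. -/
def Stuck (t : Tm) : Prop := ¬ IsValue t ∧ ∀ u, ¬ Red t u

/-- Evaluation: reduce to an irreducible term. -/
def Eval (t t' : Tm) : Prop := RedStar t t' ∧ ∀ u, ¬ Red t' u

def IsRedex (r : Tm) : Prop :=
  (∃ t v, IsValue v ∧ r = app (lam t) v) ∨
  (∃ E s, r = reset (PCtx.plug E (shift s))) ∨
  (∃ v, IsValue v ∧ r = reset v)

/-- Labels of the LTS. -/
inductive Label : Type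
  | tau : Label
  | val : Tm → Label
  | ctx : PCtx → Label

/-- The labelled transition system for λ_S. -/
inductive Step : Tm → Label → Tm → Prop
  | beta {t v : Tm} (hv : IsValue v) :
      Step (app (lam t) v) .tau (substT 0 v t)
  | resetVal {v : Tm} (hv : IsValue v) :
      Step (reset v) .tau v
  | appL {t0 t0' t1 : Tm} :
      Step t0 .tau t0' → Step (app t0 t1) .tau (app t0' t1)
  | appR {v t t' : Tm} (hv : IsValue v) :
      Step t .tau t' → Step (app v t) .tau (app v t')
  | resetT {t t' : Tm} :
      Step t .tau t' → Step (reset t) .tau (reset t')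
  | resetCap {t t' : Tm} :
      Step t (.ctx .hole) t' → Step (reset t) .tau t'
  | lamApp {t v : Tm} (hv : IsValue v) :
      Step (lam t) (.val v) (substT 0 v t)
  | shiftCap {t : Tm} (E : PCtx) :
      Step (shift t) (.ctx E) (reset (substT 0 (contOf E) t))
  | capL {t0 t0' t1 : Tm} {E : PCtx} :
      Step t0 (.ctx (.appL E t1)) t0' → Step (app t0 t1) (.ctx E) t0'
  | capR {b t t' : Tm} {E : PCtx} :
      Step t (.ctx (.appV b E)) t' → Step (app (lam b) t) (.ctx E) t'

def TauStar : Tm → Tm → Prop := Relation.ReflTransGen (fun a b => Step a .tau b)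

/-- Weak delay transition: τ-steps, then an `l`-step if `l ≠ τ`. -/
def Weak (t : Tm) (l : Label) (t' : Tm) : Prop :=
  match l with
  | .tau => TauStar t t'
  | _ => ∃ u, TauStar t u ∧ Step u l t'

/-- Applicative simulation. -/
def IsSim (R : Tm → Tm → Prop) : Prop :=
  ∀ ⦃t0 t1⦄, R t0 t1 → ∀ ⦃l t0'⦄, Step t0 l t0' →
    ∃ t1', Weak t1 l t1' ∧ R t0' t1'

def IsBisim (R : Tm → Tm → Prop) : Prop := IsSim R ∧ IsSim (flip R)

/-- Applicative bisimilarity: the largest applicative bisimulation. -/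
def Bisim (t0 t1 : Tm) : Prop := ∃ R, IsBisim R ∧ R t0 t1

/-- Big-step applicative simulation. -/
def IsBigSim (R : Tm → Tm → Prop) : Prop :=
  ∀ ⦃t0 t1⦄, R t0 t1 → ∀ ⦃l t0'⦄, l ≠ Label.tau → Weak t0 l t0' →
    ∃ t1', Weak t1 l t1' ∧ R t0' t1'

def IsBigBisim (R : Tm → Tm → Prop) : Prop := IsBigSim R ∧ IsBigSim (flip R)

/-- Big-step applicative bisimilarity. -/
def BigBisim (t0 t1 : Tm) : Prop := ∃ R, IsBigBisim R ∧ R t0 t1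

/-- General contexts. -/
inductive Ctx : Type
  | hole : Ctx
  | lam : Ctx → Ctx
  | appL : Ctx → Tm → Ctx
  | appR : Tm → Ctx → Ctx
  | shift : Ctx → Ctx
  | reset : Ctx → Ctx

/-- Plugging a term in a general context (free variables may be captured). -/
def Ctx.plug : Ctx → Tm → Tm
  | .hole, t => t
  | .lam C, t => Tm.lam (C.plug t)
  | .appL C s, t => Tm.app (C.plug t) s
  | .appR s C, t => Tm.app s (C.plug t)
  | .shift C, t => Tm.shift (C.plug t)
  | .reset C, t => Tm.reset (C.plug t)

def CtxClosedUnder : ℕ → Ctx → Prop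
  | _, .hole => True
  | n, .lam C => CtxClosedUnder (n+1) C
  | n, .appL C s => CtxClosedUnder n C ∧ ClosedUnder n s
  | n, .appR s C => ClosedUnder n s ∧ CtxClosedUnder n C
  | n, .shift C => CtxClosedUnder (n+1) C
  | n, .reset C => CtxClosedUnder n C

def ClosedCtx (C : Ctx) : Prop := CtxClosedUnder 0 C

def EvalsToValue (t : Tm) : Prop := ∃ v, IsValue v ∧ Eval t v

def EvalsToStuck (t : Tm) : Prop := ∃ s, Stuck s ∧ Eval t s

/-- Contextual equivalence on closed terms. -/
def CtxEquiv (t0 t1 : Tm) : Prop :=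
  ∀ C : Ctx, ClosedCtx C →
    (EvalsToValue (C.plug t0) ↔ EvalsToValue (C.plug t1)) ∧
    (EvalsToStuck (C.plug t0) ↔ EvalsToStuck (C.plug t1))

/-- Contextual equivalence restricted to evaluation contexts. -/
def ECtxEquiv (t0 t1 : Tm) : Prop :=
  ∀ F : ECtx, ClosedECtx F →
    (EvalsToValue (F.plug t0) ↔ EvalsToValue (F.plug t1)) ∧
    (EvalsToStuck (F.plug t0) ↔ EvalsToStuck (F.plug t1))

/-- Lifting a substitution under a binder. -/
def liftSub (σ : ℕ → Tm) : ℕ → Tm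
  | 0 => var 0
  | n+1 => liftT 1 0 (σ n)

/-- Apply a substitution to all free variables of a term. -/
def applySub (σ : ℕ → Tm) : Tm → Tm
  | var n => σ n
  | lam t => lam (applySub (liftSub σ) t)
  | app a b => app (applySub σ a) (applySub σ b)
  | shift t => shift (applySub (liftSub σ) t)
  | reset t => reset (applySub σ t)

/-- A closing substitution maps every variable to a closed value. -/
def ClosingSub (σ : ℕ → Tm) : Prop := ∀ n, IsValue (σ n) ∧ Closed (σ n)

/-- Open extension of a relation on closed terms. -/
def OpenExt (R : Tm → Tm → Prop) (t0 t1 : Tm) : Prop :=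
  ∀ σ, ClosingSub σ → R (applySub σ t0) (applySub σ t1)

/-- Howe's closure of applicative bisimilarity (compatible refinement rules inlined). -/
inductive Howe : Tm → Tm → Prop
  | base {t0 t1} : OpenExt Bisim t0 t1 → Howe t0 t1
  | right {t0 t2 t1} : Howe t0 t2 → OpenExt Bisim t2 t1 → Howe t0 t1
  | compVar (n : ℕ) : Howe (var n) (var n)
  | compLam {t0 t1} : Howe t0 t1 → Howe (lam t0) (lam t1)
  | compApp {a0 a1 b0 b1} : Howe a0 a1 → Howe b0 b1 → Howe (app a0 b0) (app a1 b1)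
  | compShift {t0 t1} : Howe t0 t1 → Howe (shift t0) (shift t1)
  | compReset {t0 t1} : Howe t0 t1 → Howe (reset t0) (reset t1)

/-- Howe's closure restricted to closed terms. -/
def HoweC (t0 t1 : Tm) : Prop := Closed t0 ∧ Closed t1 ∧ Howe t0 t1

/-- Extension of Howe's closure to pure contexts. -/
inductive PCtxHowe : PCtx → PCtx → Prop
  | hole : PCtxHowe .hole .hole
  | appV {b0 b1 E0 E1} : Howe b0 b1 → PCtxHowe E0 E1 → PCtxHowe (.appV b0 E0) (.appV b1 E1)
  | appL {E0 E1 t0 t1} : PCtxHowe E0 E1 → Howe t0 t1 → PCtxHowe (.appL E0 t0) (.appL E1 t1)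

/-- Extension of Howe's closure to labels. -/
def LabHowe : Label → Label → Prop
  | .tau, .tau => True
  | .val v0, .val v1 => Closed v0 ∧ Closed v1 ∧ Howe v0 v1
  | .ctx E0, .ctx E1 => PCtxHowe E0 E1
  | _, _ => False

/-- ω = λx. x x -/
def omegaTm : Tm := lam (app (var 0) (var 0))

/-- Ω = ω ω, the standard diverging term. -/
def OmegaTm : Tm := app omegaTm omegaTm

/-- Every τ-reachable term can do a τ-step: only infinite τ-sequences. -/
def Diverges (t : Tm) : Prop := ∀ u, TauStar t u → ∃ u', Step u .tau u'

/-- No weak non-τ transition. -/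
def NoObs (t : Tm) : Prop := ∀ l t', l ≠ Label.tau → ¬ Weak t l t'
open Tm

theorem closedUnder_mono : ∀ {t n m}, ClosedUnder n t → n ≤ m → ClosedUnder m t := by
  intro t
  induction t with
  | var k => intro n m h hle; simp [ClosedUnder] at *; omega
  | lam b ih => intro n m h hle; exact ih h (by omega)
  | app a b iha ihb => intro n m h hle; exact ⟨iha h.1 hle, ihb h.2 hle⟩
  | shift b ih => intro n m h hle; exact ih h (by omega)
  | reset b ih => intro n m h hle; exact ih h hle

theorem liftT_closed : ∀ {t} (d) {c c'}, ClosedUnder c' t → c' ≤ c → liftT d c t = t := by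
  intro t
  induction t with
  | var k => intro d c c' h hle; simp [ClosedUnder] at h; simp [liftT]; omega
  | lam b ih => intro d c c' h hle; simp [liftT]; exact ih d h (by omega)
  | app a b iha ihb => intro d c c' h hle; simp [liftT]; exact ⟨iha d h.1 hle, ihb d h.2 hle⟩
  | shift b ih => intro d c c' h hle; simp [liftT]; exact ih d h (by omega)
  | reset b ih => intro d c c' h hle; simp [liftT]; exact ih d h hle

theorem liftT_liftT_le : ∀ {t d d' c c'}, c ≤ c' → c' ≤ c + d →
    liftT d' c' (liftT d c t) = liftT (d + d') c t := by
  intro t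
  induction t with
  | var k =>
      intro d d' c c' h1 h2; simp only [liftT]
      split_ifs <;> simp only [liftT] <;> split_ifs <;>
        first | rfl | (simp only [Tm.var.injEq]; omega) | (exfalso; omega)
  | lam b ih => intro d d' c c' h1 h2; simp only [liftT]; rw [ih (by omega) (by omega)]
  | app a b iha ihb =>
      intro d d' c c' h1 h2; simp only [liftT]; rw [iha h1 h2, ihb h1 h2]
  | shift b ih => intro d d' c c' h1 h2; simp only [liftT]; rw [ih (by omega) (by omega)]
  | reset b ih => intro d d' c c' h1 h2; simp only [liftT]; rw [ih h1 h2]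

theorem liftT_liftT_comm : ∀ {t d d' c c'}, c' ≤ c →
    liftT d' c' (liftT d c t) = liftT d (c + d') (liftT d' c' t) := by
  intro t
  induction t with
  | var k =>
      intro d d' c c' h; simp only [liftT]
      split_ifs <;> simp only [liftT] <;> split_ifs <;>
        first | rfl | (simp only [Tm.var.injEq]; omega) | (exfalso; omega)
  | lam b ih =>
      intro d d' c c' h; simp only [liftT]
      rw [ih (by omega), Nat.add_right_comm]
  | app a b iha ihb =>
      intro d d' c c' h; simp only [liftT]; rw [iha h, ihb h]
  | shift b ih => intro d d' c c' h; simp only [liftT]; rw [ih (by omega), Nat.add_right_comm]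
  | reset b ih => intro d d' c c' h; simp only [liftT]; rw [ih h]

theorem lift_closedUnder : ∀ {t n d c}, ClosedUnder n t → c ≤ n →
    ClosedUnder (n + d) (liftT d c t) := by
  intro t
  induction t with
  | var k =>
      intro n d c h hc; simp [ClosedUnder] at h; simp [liftT]
      split_ifs <;> simp [ClosedUnder] <;> omega
  | lam b ih =>
      intro n d c h hc; simp only [liftT, ClosedUnder] at *
      have := ih (d := d) (c := c+1) h (by omega)
      rwa [Nat.add_right_comm] at this
  | app a b iha ihb => intro n d c h hc; exact ⟨iha h.1 hc, ihb h.2 hc⟩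
  | shift b ih =>
      intro n d c h hc; simp only [liftT, ClosedUnder] at *
      have := ih (d := d) (c := c+1) h (by omega)
      rwa [Nat.add_right_comm] at this
  | reset b ih => intro n d c h hc; exact ih h hc

theorem applySub_congrUnder : ∀ {t m} {σ σ' : ℕ → Tm}, ClosedUnder m t →
    (∀ k < m, σ k = σ' k) → applySub σ t = applySub σ' t := by
  intro t
  induction t with
  | var k => intro m σ σ' h hk; simp [ClosedUnder] at h; exact hk _ h
  | lam b ih =>
      intro m σ σ' h hk; simp only [applySub]
      rw [ih (m := m+1) h]
      intro k hk'
      match k with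
      | 0 => rfl
      | k+1 => simp [liftSub]; rw [hk k (by omega)]
  | app a b iha ihb =>
      intro m σ σ' h hk; simp only [applySub]; rw [iha h.1 hk, ihb h.2 hk]
  | shift b ih =>
      intro m σ σ' h hk; simp only [applySub]
      rw [ih (m := m+1) h]
      intro k hk'
      match k with
      | 0 => rfl
      | k+1 => simp [liftSub]; rw [hk k (by omega)]
  | reset b ih => intro m σ σ' h hk; simp only [applySub]; rw [ih h hk]

theorem liftSub_var : (liftSub fun n => var n) = fun n => var n := by
  funext n; match n with
  | 0 => rfl
  | n+1 => simp [liftSub, liftT]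

theorem applySub_var : ∀ t, applySub (fun n => var n) t = t := by
  intro t
  induction t with
  | var k => rfl
  | lam b ih => simp only [applySub]; rw [liftSub_var, ih]
  | app a b iha ihb => simp only [applySub]; rw [iha, ihb]
  | shift b ih => simp only [applySub]; rw [liftSub_var, ih]
  | reset b ih => simp only [applySub]; rw [ih]

theorem applySub_closed : ∀ {t} (σ), Closed t → applySub σ t = t := by
  intro t σ h
  rw [applySub_congrUnder (m := 0) h (by intro k hk; omega)]
  exact applySub_var t

theorem liftSub_ite (σ : ℕ → Tm) (c d : ℕ) :
    (fun n => if n < c+1 then liftSub σ n else liftSub σ (n+d)) =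
      liftSub (fun n => if n < c then σ n else σ (n+d)) := by
  funext n
  match n with
  | 0 => simp [liftSub]
  | n+1 =>
      simp only [liftSub]
      by_cases h : n < c
      · rw [if_pos (by omega), if_pos h]
      · rw [if_neg (by omega), if_neg h]
        have he : n+1+d = (n+d)+1 := by omega
        rw [he]

theorem applySub_liftT : ∀ {t c d} {σ : ℕ → Tm},
    applySub σ (liftT d c t) = applySub (fun n => if n < c then σ n else σ (n + d)) t := by
  intro t
  induction t with
  | var k =>
      intro c d σ; simp only [liftT]
      split_ifs with h <;> simp only [applySub]
      · rw [if_pos h]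
      · rw [if_neg h]
  | lam b ih =>
      intro c d σ; simp only [liftT, applySub]
      rw [ih, liftSub_ite]
  | app a b iha ihb => intro c d σ; simp only [liftT, applySub]; rw [iha, ihb]
  | shift b ih =>
      intro c d σ; simp only [liftT, applySub]
      rw [ih, liftSub_ite]
  | reset b ih => intro c d σ; simp only [liftT, applySub]; rw [ih]

theorem liftT_applySub : ∀ {t c d} {σ : ℕ → Tm},
    liftT d c (applySub σ t) = applySub (fun n => liftT d c (σ n)) t := by
  intro t
  induction t with
  | var k => intro c d σ; rfl
  | lam b ih =>
      intro c d σ; simp only [applySub, liftT]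
      rw [ih]
      have hfun : (fun n => liftT d (c+1) (liftSub σ n)) = liftSub (fun n => liftT d c (σ n)) := by
        funext n
        match n with
        | 0 => simp [liftSub, liftT]
        | n+1 =>
            simp only [liftSub]
            exact (liftT_liftT_comm (by omega)).symm
      rw [hfun]
  | app a b iha ihb => intro c d σ; simp only [applySub, liftT]; rw [iha, ihb]
  | shift b ih =>
      intro c d σ; simp only [applySub, liftT]
      rw [ih]
      have hfun : (fun n => liftT d (c+1) (liftSub σ n)) = liftSub (fun n => liftT d c (σ n)) := by
        funext n
        match n with
        | 0 => simp [liftSub, liftT]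
        | n+1 =>
            simp only [liftSub]
            exact (liftT_liftT_comm (by omega)).symm
      rw [hfun]
  | reset b ih => intro c d σ; simp only [applySub, liftT]; rw [ih]

theorem applySub_applySub : ∀ {t} {σ σ' : ℕ → Tm},
    applySub σ' (applySub σ t) = applySub (fun n => applySub σ' (σ n)) t := by
  intro t
  induction t with
  | var k => intro σ σ'; rfl
  | lam b ih =>
      intro σ σ'; simp only [applySub]
      rw [ih]
      have hfun : (fun n => applySub (liftSub σ') (liftSub σ n)) =
          liftSub (fun n => applySub σ' (σ n)) := by
        funext n
        match n with
        | 0 => rfl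
        | n+1 =>
            simp only [liftSub]
            rw [applySub_liftT, liftT_applySub]
            have : (fun k => if k < 0 then liftSub σ' k else liftSub σ' (k + 1)) =
                (fun k => liftT 1 0 (σ' k)) := by
              funext k; rw [if_neg (by omega)]; rfl
            rw [this]
      rw [hfun]
  | app a b iha ihb => intro σ σ'; simp only [applySub]; rw [iha, ihb]
  | shift b ih =>
      intro σ σ'; simp only [applySub]
      rw [ih]
      have hfun : (fun n => applySub (liftSub σ') (liftSub σ n)) =
          liftSub (fun n => applySub σ' (σ n)) := by
        funext n
        match n with
        | 0 => rfl
        | n+1 =>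
            simp only [liftSub]
            rw [applySub_liftT, liftT_applySub]
            have : (fun k => if k < 0 then liftSub σ' k else liftSub σ' (k + 1)) =
                (fun k => liftT 1 0 (σ' k)) := by
              funext k; rw [if_neg (by omega)]; rfl
            rw [this]
      rw [hfun]
  | reset b ih => intro σ σ'; simp only [applySub]; rw [ih]

theorem applySub_closedUnder : ∀ {t m n} {σ : ℕ → Tm}, ClosedUnder m t →
    (∀ k < m, ClosedUnder n (σ k)) → ClosedUnder n (applySub σ t) := by
  intro t
  induction t with
  | var k => intro m n σ h hσ; exact hσ _ h
  | lam b ih =>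
      intro m n σ h hσ
      refine ih (m := m+1) h ?_
      intro k hk
      match k with
      | 0 => simp [liftSub, ClosedUnder]
      | k+1 =>
          simp only [liftSub]
          exact lift_closedUnder (hσ k (by omega)) (by omega)
  | app a b iha ihb => intro m n σ h hσ; exact ⟨iha h.1 hσ, ihb h.2 hσ⟩
  | shift b ih =>
      intro m n σ h hσ
      refine ih (m := m+1) h ?_
      intro k hk
      match k with
      | 0 => simp [liftSub, ClosedUnder]
      | k+1 =>
          simp only [liftSub]
          exact lift_closedUnder (hσ k (by omega)) (by omega)
  | reset b ih => intro m n σ h hσ; exact ih h hσ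

/-- The substitution `[0 := s]` for closed `s`. -/
def sub0 (s : Tm) : ℕ → Tm := fun n => if n = 0 then s else var (n-1)

def subJ (s : Tm) (j : ℕ) : ℕ → Tm := fun n => if n = j then s else if j < n then var (n-1) else var n

theorem substT_eq_applySub : ∀ {t j s}, Closed s → substT j s t = applySub (subJ s j) t := by
  intro t
  induction t with
  | var k =>
      intro j s hs; simp only [substT, applySub, subJ]
      split_ifs with h1 h2
      · rw [liftT_closed _ hs (by omega)]
      · rfl
      · rfl
  | lam b ih =>
      intro j s hs; simp only [substT, applySub]
      rw [ih hs]
      have hfun : subJ s (j+1) = liftSub (subJ s j) := by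
        funext n
        match n with
        | 0 => simp [subJ, liftSub]
        | n+1 =>
            simp only [subJ, liftSub]
            by_cases h1 : n = j
            · rw [if_pos (by omega), if_pos h1, liftT_closed _ hs (by omega)]
            · rw [if_neg (by omega), if_neg h1]
              by_cases h2 : j < n
              · rw [if_pos (by omega), if_pos h2]
                simp [liftT]
                omega
              · rw [if_neg (by omega), if_neg h2]
                simp [liftT]
      rw [hfun]
  | app a b iha ihb => intro j s hs; simp only [substT, applySub]; rw [iha hs, ihb hs]
  | shift b ih =>
      intro j s hs; simp only [substT, applySub]
      rw [ih hs]
      have hfun : subJ s (j+1) = liftSub (subJ s j) := by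
        funext n
        match n with
        | 0 => simp [subJ, liftSub]
        | n+1 =>
            simp only [subJ, liftSub]
            by_cases h1 : n = j
            · rw [if_pos (by omega), if_pos h1, liftT_closed _ hs (by omega)]
            · rw [if_neg (by omega), if_neg h1]
              by_cases h2 : j < n
              · rw [if_pos (by omega), if_pos h2]
                simp [liftT]
                omega
              · rw [if_neg (by omega), if_neg h2]
                simp [liftT]
      rw [hfun]
  | reset b ih => intro j s hs; simp only [substT, applySub]; rw [ih hs]

theorem substT0_eq : ∀ {t s}, Closed s → substT 0 s t = applySub (sub0 s) t := by
  intro t s hs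
  rw [substT_eq_applySub hs]
  have : subJ s 0 = sub0 s := by
    funext n
    match n with
    | 0 => rfl
    | n+1 => simp [subJ, sub0]
  rw [this]

theorem subst_closedUnder : ∀ {t m v}, Closed v → ClosedUnder (m+1) t →
    ClosedUnder m (substT 0 v t) := by
  intro t m v hv ht
  rw [substT0_eq hv]
  refine applySub_closedUnder ht ?_
  intro k hk
  match k with
  | 0 => exact closedUnder_mono hv (by omega)
  | k+1 => simp [sub0, ClosedUnder]; omega

theorem closedUnder_bound : ∀ t, ∃ m, ClosedUnder m t := by
  intro t
  induction t with
  | var k => exact ⟨k+1, by simp [ClosedUnder]⟩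
  | lam b ih =>
      obtain ⟨m, hm⟩ := ih
      exact ⟨m, show ClosedUnder (m+1) b from closedUnder_mono hm (by omega)⟩
  | app a b iha ihb =>
      obtain ⟨m, hm⟩ := iha; obtain ⟨m', hm'⟩ := ihb
      exact ⟨max m m', ⟨closedUnder_mono hm (le_max_left _ _), closedUnder_mono hm' (le_max_right _ _)⟩⟩
  | shift b ih =>
      obtain ⟨m, hm⟩ := ih
      exact ⟨m, show ClosedUnder (m+1) b from closedUnder_mono hm (by omega)⟩
  | reset b ih => obtain ⟨m, hm⟩ := ih; exact ⟨m, hm⟩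

theorem applySub_closing : ∀ {t n} {σ : ℕ → Tm}, ClosingSub σ → ClosedUnder n (applySub σ t) := by
  intro t n σ hσ
  obtain ⟨m, hm⟩ := closedUnder_bound t
  exact applySub_closedUnder hm (fun k _ => closedUnder_mono (hσ k).2 (by omega))
/-- Substitutions mapping variables to values or variables. -/
def GoodSub (σ : ℕ → Tm) : Prop := ∀ n, IsValue (σ n) ∨ ∃ m, σ n = var m

theorem goodSub_of_closing {σ : ℕ → Tm} (h : ClosingSub σ) : GoodSub σ :=
  fun n => Or.inl (h n).1

theorem goodSub_var : GoodSub (fun n => var n) := fun n => Or.inr ⟨n, rfl⟩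

theorem goodSub_liftSub {σ : ℕ → Tm} (h : GoodSub σ) : GoodSub (liftSub σ) := by
  intro n
  match n with
  | 0 => exact Or.inr ⟨0, rfl⟩
  | n+1 =>
      rcases h n with ⟨b, hb⟩ | ⟨m, hm⟩
      · exact Or.inl ⟨liftT 1 1 b, by simp [liftSub, hb, liftT]⟩
      · exact Or.inr ⟨m+1, by simp [liftSub, hm, liftT]⟩

theorem closingSub_comp {ρ σ : ℕ → Tm} (hρ : ClosingSub ρ) (hσ : GoodSub σ) :
    ClosingSub (fun n => applySub ρ (σ n)) := by
  intro n
  show IsValue (applySub ρ (σ n)) ∧ Closed (applySub ρ (σ n))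
  rcases hσ n with ⟨b, hb⟩ | ⟨m, hm⟩
  · rw [hb]
    exact ⟨⟨_, rfl⟩, applySub_closing hρ⟩
  · rw [hm]
    exact ⟨(hρ m).1, (hρ m).2⟩

theorem openExt_lift {a b : Tm} (h : OpenExt Bisim a b) (d c : ℕ) :
    OpenExt Bisim (liftT d c a) (liftT d c b) := by
  intro ρ hρ
  rw [applySub_liftT, applySub_liftT]
  apply h
  intro n
  show IsValue (if n < c then ρ n else ρ (n + d)) ∧ Closed (if n < c then ρ n else ρ (n + d))
  split_ifs <;> exact hρ _

theorem openExt_sub {a b : Tm} (h : OpenExt Bisim a b) {σ : ℕ → Tm} (hσ : GoodSub σ) :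
    OpenExt Bisim (applySub σ a) (applySub σ b) := by
  intro ρ hρ
  rw [applySub_applySub, applySub_applySub]
  exact h _ (closingSub_comp hρ hσ)

theorem howe_refl : ∀ t, Howe t t := by
  intro t
  induction t with
  | var k => exact Howe.compVar k
  | lam b ih => exact Howe.compLam ih
  | app a b iha ihb => exact Howe.compApp iha ihb
  | shift b ih => exact Howe.compShift ih
  | reset b ih => exact Howe.compReset ih

theorem howe_lift {a b : Tm} (h : Howe a b) : ∀ d c, Howe (liftT d c a) (liftT d c b) := by
  induction h with
  | base h => exact fun d c => Howe.base (openExt_lift h d c)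
  | right _ h2 ih => exact fun d c => Howe.right (ih d c) (openExt_lift h2 d c)
  | compVar k =>
      intro d c
      simp only [liftT]
      split_ifs <;> exact Howe.compVar _
  | compLam _ ih => exact fun d c => Howe.compLam (ih d (c+1))
  | compApp _ _ iha ihb => exact fun d c => Howe.compApp (iha d c) (ihb d c)
  | compShift _ ih => exact fun d c => Howe.compShift (ih d (c+1))
  | compReset _ ih => exact fun d c => Howe.compReset (ih d c)

def HoweSub (σ0 σ1 : ℕ → Tm) : Prop := GoodSub σ0 ∧ GoodSub σ1 ∧ ∀ n, Howe (σ0 n) (σ1 n)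

theorem howeSub_lift {σ0 σ1 : ℕ → Tm} (h : HoweSub σ0 σ1) : HoweSub (liftSub σ0) (liftSub σ1) := by
  refine ⟨goodSub_liftSub h.1, goodSub_liftSub h.2.1, ?_⟩
  intro n
  match n with
  | 0 => exact Howe.compVar 0
  | n+1 => exact howe_lift (h.2.2 n) 1 0

theorem howe_substRefl : ∀ t {σ0 σ1 : ℕ → Tm}, HoweSub σ0 σ1 →
    Howe (applySub σ0 t) (applySub σ1 t) := by
  intro t
  induction t with
  | var k => intro σ0 σ1 h; exact h.2.2 k
  | lam b ih => intro σ0 σ1 h; exact Howe.compLam (ih (howeSub_lift h))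
  | app a b iha ihb => intro σ0 σ1 h; exact Howe.compApp (iha h) (ihb h)
  | shift b ih => intro σ0 σ1 h; exact Howe.compShift (ih (howeSub_lift h))
  | reset b ih => intro σ0 σ1 h; exact Howe.compReset (ih h)

theorem howe_subst_gen {t0 t1 : Tm} (h : Howe t0 t1) :
    ∀ {σ0 σ1 : ℕ → Tm}, HoweSub σ0 σ1 → Howe (applySub σ0 t0) (applySub σ1 t1) := by
  induction h with
  | base h =>
      intro σ0 σ1 hσ
      exact Howe.right (howe_substRefl _ hσ) (openExt_sub h hσ.2.1)
  | right _ h2 ih =>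
      intro σ0 σ1 hσ
      exact Howe.right (ih hσ) (openExt_sub h2 hσ.2.1)
  | compVar k => intro σ0 σ1 hσ; exact hσ.2.2 k
  | compLam _ ih => intro σ0 σ1 hσ; exact Howe.compLam (ih (howeSub_lift hσ))
  | compApp _ _ iha ihb => intro σ0 σ1 hσ; exact Howe.compApp (iha hσ) (ihb hσ)
  | compShift _ ih => intro σ0 σ1 hσ; exact Howe.compShift (ih (howeSub_lift hσ))
  | compReset _ ih => intro σ0 σ1 hσ; exact Howe.compReset (ih hσ)

theorem howe_subst {t0 t1 v0 v1 : Tm} (h : Howe t0 t1) (hv : Howe v0 v1)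
    (hv0 : IsValue v0) (hv1 : IsValue v1) (hc0 : Closed v0) (hc1 : Closed v1) :
    Howe (substT 0 v0 t0) (substT 0 v1 t1) := by
  rw [substT0_eq hc0, substT0_eq hc1]
  refine howe_subst_gen h ⟨?_, ?_, ?_⟩
  · intro n; match n with
    | 0 => exact Or.inl hv0
    | n+1 => exact Or.inr ⟨n, rfl⟩
  · intro n; match n with
    | 0 => exact Or.inl hv1
    | n+1 => exact Or.inr ⟨n, rfl⟩
  · intro n; match n with
    | 0 => exact hv
    | n+1 => exact howe_refl _

theorem pctxHowe_refl : ∀ E, PCtxHowe E E := by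
  intro E
  induction E with
  | hole => exact PCtxHowe.hole
  | appV b E ih => exact PCtxHowe.appV (howe_refl b) ih
  | appL E s ih => exact PCtxHowe.appL ih (howe_refl s)

theorem pctxHowe_comp {A0 A1 B0 B1 : PCtx} (hA : PCtxHowe A0 A1) (hB : PCtxHowe B0 B1) :
    PCtxHowe (A0.comp B0) (A1.comp B1) := by
  induction hB with
  | hole => exact hA
  | appV hb _ ih => exact PCtxHowe.appV hb ih
  | appL _ ht ih => exact PCtxHowe.appL ih ht

theorem pctxHowe_liftC {E0 E1 : PCtx} (h : PCtxHowe E0 E1) (d c : ℕ) :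
    PCtxHowe (PCtx.liftC d c E0) (PCtx.liftC d c E1) := by
  induction h generalizing c with
  | hole => exact PCtxHowe.hole
  | appV hb _ ih => exact PCtxHowe.appV (howe_lift hb d (c+1)) (ih c)
  | appL _ ht ih => exact PCtxHowe.appL (ih c) (howe_lift ht d c)

theorem howe_plug {E0 E1 : PCtx} (h : PCtxHowe E0 E1) :
    ∀ {u v : Tm}, Howe u v → Howe (E0.plug u) (E1.plug v) := by
  induction h with
  | hole => exact fun h => h
  | appV hb _ ih =>
      intro u v huv
      exact ih (Howe.compApp (Howe.compLam hb) huv)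
  | appL _ ht ih =>
      intro u v huv
      exact ih (Howe.compApp huv ht)

theorem contOf_howe {E0 E1 : PCtx} (h : PCtxHowe E0 E1) : Howe (contOf E0) (contOf E1) :=
  Howe.compLam (Howe.compReset (howe_plug (pctxHowe_liftC h 1 0) (Howe.compVar 0)))

theorem howe_ctx (C : Ctx) {a b : Tm} (h : Howe a b) : Howe (C.plug a) (C.plug b) := by
  induction C with
  | hole => exact h
  | lam C ih => exact Howe.compLam ih
  | appL C s ih => exact Howe.compApp ih (howe_refl s)
  | appR s C ih => exact Howe.compApp (howe_refl s) ih
  | shift C ih => exact Howe.compShift ih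
  | reset C ih => exact Howe.compReset ih
theorem weak_of_step {a l a'} (h : Step a l a') : Weak a l a' := by
  cases l with
  | tau => exact Relation.ReflTransGen.single h
  | val v => exact ⟨a, Relation.ReflTransGen.refl, h⟩
  | ctx E => exact ⟨a, Relation.ReflTransGen.refl, h⟩

theorem isSim_eq : IsSim Eq := by
  intro a b hab l a' ha
  subst hab
  exact ⟨a', weak_of_step ha, rfl⟩

theorem bisim_refl (t : Tm) : Bisim t t :=
  ⟨Eq, ⟨isSim_eq, fun a b hab l a' ha => by cases hab; exact ⟨a', weak_of_step ha, rfl⟩⟩, rfl⟩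

/-- Howe's closure with a bound on the number of `right` (composition) rules. -/
inductive HoweN : ℕ → Tm → Tm → Prop
  | base {n t0 t1} : OpenExt Bisim t0 t1 → HoweN n t0 t1
  | right {n t0 t2 t1} : HoweN n t0 t2 → OpenExt Bisim t2 t1 → HoweN (n+1) t0 t1
  | compVar {n} (k : ℕ) : HoweN n (var k) (var k)
  | compLam {n t0 t1} : HoweN n t0 t1 → HoweN n (lam t0) (lam t1)
  | compApp {n a0 a1 b0 b1} : HoweN n a0 a1 → HoweN n b0 b1 → HoweN n (app a0 b0) (app a1 b1)
  | compShift {n t0 t1} : HoweN n t0 t1 → HoweN n (shift t0) (shift t1)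
  | compReset {n t0 t1} : HoweN n t0 t1 → HoweN n (reset t0) (reset t1)

theorem howe_of_howeN {n t0 t1} (h : HoweN n t0 t1) : Howe t0 t1 := by
  induction h with
  | base h => exact Howe.base h
  | right _ h2 ih => exact Howe.right ih h2
  | compVar k => exact Howe.compVar k
  | compLam _ ih => exact Howe.compLam ih
  | compApp _ _ iha ihb => exact Howe.compApp iha ihb
  | compShift _ ih => exact Howe.compShift ih
  | compReset _ ih => exact Howe.compReset ih

theorem howeN_mono : ∀ {n t0 t1}, HoweN n t0 t1 → ∀ {m}, n ≤ m → HoweN m t0 t1 := by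
  intro n t0 t1 h
  induction h with
  | base h => exact fun _ => HoweN.base h
  | right _ h2 ih =>
      intro m hm
      match m, hm with
      | m+1, hm => exact HoweN.right (ih (by omega)) h2
  | compVar k => exact fun _ => HoweN.compVar k
  | compLam _ ih => exact fun hm => HoweN.compLam (ih hm)
  | compApp _ _ iha ihb => exact fun hm => HoweN.compApp (iha hm) (ihb hm)
  | compShift _ ih => exact fun hm => HoweN.compShift (ih hm)
  | compReset _ ih => exact fun hm => HoweN.compReset (ih hm)

theorem howeN_of_howe {t0 t1} (h : Howe t0 t1) : ∃ n, HoweN n t0 t1 := by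
  induction h with
  | base h => exact ⟨0, HoweN.base h⟩
  | right _ h2 ih => obtain ⟨n, hn⟩ := ih; exact ⟨n+1, HoweN.right hn h2⟩
  | compVar k => exact ⟨0, HoweN.compVar k⟩
  | compLam _ ih => obtain ⟨n, hn⟩ := ih; exact ⟨n, HoweN.compLam hn⟩
  | compApp _ _ iha ihb =>
      obtain ⟨n, hn⟩ := iha; obtain ⟨m, hm⟩ := ihb
      exact ⟨max n m, HoweN.compApp (howeN_mono hn (le_max_left _ _))
        (howeN_mono hm (le_max_right _ _))⟩
  | compShift _ ih => obtain ⟨n, hn⟩ := ih; exact ⟨n, HoweN.compShift hn⟩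
  | compReset _ ih => obtain ⟨n, hn⟩ := ih; exact ⟨n, HoweN.compReset hn⟩

/-- Substitution with a single good substitution preserves the `right`-count. -/
theorem howeN_substSame : ∀ {n t0 t1}, HoweN n t0 t1 → ∀ {σ : ℕ → Tm}, GoodSub σ →
    HoweN n (applySub σ t0) (applySub σ t1) := by
  intro n t0 t1 h
  induction h with
  | base h => exact fun hσ => HoweN.base (openExt_sub h hσ)
  | right _ h2 ih => exact fun hσ => HoweN.right (ih hσ) (openExt_sub h2 hσ)
  | compVar k => exact fun _ => HoweN.base (fun ρ _ => bisim_refl _)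
  | compLam _ ih => exact fun hσ => HoweN.compLam (ih (goodSub_liftSub hσ))
  | compApp _ _ iha ihb => exact fun hσ => HoweN.compApp (iha hσ) (ihb hσ)
  | compShift _ ih => exact fun hσ => HoweN.compShift (ih (goodSub_liftSub hσ))
  | compReset _ ih => exact fun hσ => HoweN.compReset (ih hσ)

/-- The canonical closing substitution: every variable goes to the identity function. -/
def sid : ℕ → Tm := fun _ => lam (var 0)

theorem closingSub_sid : ClosingSub sid := by
  intro n
  exact ⟨⟨_, rfl⟩, by simp [sid, Closed, ClosedUnder]⟩
/-! ### Pure context closedness -/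

def PClosedUnder : ℕ → PCtx → Prop
  | _, .hole => True
  | n, .appV b E => ClosedUnder (n+1) b ∧ PClosedUnder n E
  | n, .appL E s => PClosedUnder n E ∧ ClosedUnder n s

def LabClosed : Label → Prop
  | .tau => True
  | .val v => IsValue v ∧ Closed v
  | .ctx E => PClosedUnder 0 E

theorem plug_closed_iff : ∀ (E : PCtx) (t : Tm) (n : ℕ),
    ClosedUnder n (PCtx.plug E t) ↔ (PClosedUnder n E ∧ ClosedUnder n t) := by
  intro E
  induction E with
  | hole => intro t n; simp [PCtx.plug, PClosedUnder]
  | appV b E ih =>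
      intro t n
      simp only [PCtx.plug, PClosedUnder]
      rw [ih]
      show (PClosedUnder n E ∧ ClosedUnder (n+1) b ∧ ClosedUnder n t) ↔ _
      tauto
  | appL E s ih =>
      intro t n
      simp only [PCtx.plug, PClosedUnder]
      rw [ih]
      show (PClosedUnder n E ∧ ClosedUnder n t ∧ ClosedUnder n s) ↔ _
      tauto

theorem pclosedUnder_mono : ∀ {E n m}, PClosedUnder n E → n ≤ m → PClosedUnder m E := by
  intro E
  induction E with
  | hole => intro n m _ _; trivial
  | appV b E ih =>
      intro n m h hle
      exact ⟨closedUnder_mono h.1 (by omega), ih h.2 hle⟩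
  | appL E s ih =>
      intro n m h hle
      exact ⟨ih h.1 hle, closedUnder_mono h.2 hle⟩

theorem liftC_closed : ∀ {E d c}, PClosedUnder c E → PCtx.liftC d c E = E := by
  intro E
  induction E with
  | hole => intro d c _; rfl
  | appV b E ih =>
      intro d c h
      simp only [PCtx.liftC]
      rw [liftT_closed _ h.1 (by omega), ih h.2]
  | appL E s ih =>
      intro d c h
      simp only [PCtx.liftC]
      rw [liftT_closed _ h.2 (by omega), ih h.1]

theorem contOf_closed {E : PCtx} (h : PClosedUnder 0 E) : Closed (contOf E) := by
  show ClosedUnder 1 (reset ((PCtx.liftC 1 0 E).plug (var 0)))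
  rw [liftC_closed h]
  show ClosedUnder 1 ((PCtx.plug E (var 0)))
  rw [plug_closed_iff]
  exact ⟨pclosedUnder_mono h (by omega), by simp [ClosedUnder]⟩

theorem contOf_value (E : PCtx) : IsValue (contOf E) := ⟨_, rfl⟩

/-! ### PCtx composition -/

theorem comp_plug : ∀ (E' E : PCtx) (t : Tm),
    (PCtx.comp E E').plug t = E.plug (E'.plug t) := by
  intro E'
  induction E' with
  | hole => intro E t; rfl
  | appV b E' ih => intro E t; exact ih E (app (lam b) t)
  | appL E' s ih => intro E t; exact ih E (app t s)

theorem comp_hole_left : ∀ E : PCtx, PCtx.comp .hole E = E := by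
  intro E
  induction E with
  | hole => rfl
  | appV b E ih => simp only [PCtx.comp]; rw [ih]
  | appL E s ih => simp only [PCtx.comp]; rw [ih]

theorem comp_assoc : ∀ (A B C : PCtx), (A.comp B).comp C = A.comp (B.comp C) := by
  intro A B C
  induction C with
  | hole => rfl
  | appV b C ih => simp only [PCtx.comp]; rw [ih]
  | appL C s ih => simp only [PCtx.comp]; rw [ih]

theorem pclosed_comp : ∀ {A B : PCtx} {n}, PClosedUnder n A → PClosedUnder n B →
    PClosedUnder n (A.comp B) := by
  intro A B
  induction B with
  | hole => intro n hA _; exact hA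
  | appV b B ih => intro n hA hB; exact ⟨hB.1, ih hA hB.2⟩
  | appL B s ih => intro n hA hB; exact ⟨ih hA hB.1, hB.2⟩

/-! ### Capture transitions -/

theorem canCap : ∀ (E₀ : PCtx) {t : Tm} (g : PCtx → Tm),
    (∀ E₁, Step t (.ctx E₁) (g E₁)) →
    ∀ E₁, Step (E₀.plug t) (.ctx E₁) (g (E₁.comp E₀)) := by
  intro E₀
  induction E₀ with
  | hole => intro t g h E₁; exact h E₁
  | appV b E ih =>
      intro t g h E₁
      exact ih (fun E₁ => g (.appV b E₁)) (fun E₁ => Step.capR (h (.appV b E₁))) E₁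
  | appL E s ih =>
      intro t g h E₁
      exact ih (fun E₁ => g (.appL E₁ s)) (fun E₁ => Step.capL (h (.appL E₁ s))) E₁

theorem can_shift (E₀ : PCtx) (r : Tm) (E₁ : PCtx) :
    Step (E₀.plug (shift r)) (.ctx E₁) (reset (substT 0 (contOf (E₁.comp E₀)) r)) :=
  canCap E₀ (fun E => reset (substT 0 (contOf E) r)) (fun E => Step.shiftCap E) E₁

theorem step_ctx_charac : ∀ {t l t'}, Step t l t' → ∀ E, l = .ctx E →
    ∃ E₀ r, t = E₀.plug (shift r) ∧ t' = reset (substT 0 (contOf (E.comp E₀)) r) := by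
  intro t l t' h
  induction h with
  | beta hv => intro E hE; cases hE
  | resetVal hv => intro E hE; cases hE
  | appL _ ih => intro E hE; cases hE
  | appR hv _ ih => intro E hE; cases hE
  | resetT _ ih => intro E hE; cases hE
  | resetCap _ ih => intro E hE; cases hE
  | lamApp hv => intro E hE; cases hE
  | shiftCap E' => intro E hE; cases hE; exact ⟨.hole, _, rfl, rfl⟩
  | @capL t0 t0' t1 E' h ih =>
      intro E hE
      cases hE
      obtain ⟨E₀, r, h1, h2⟩ := ih (.appL E' t1) rfl
      refine ⟨(PCtx.appL .hole t1).comp E₀, r, ?_, ?_⟩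
      · rw [comp_plug]
        simp only [PCtx.plug]
        rw [h1]
      · rw [h2, ← comp_assoc]
        rfl
  | @capR b t t' E' h ih =>
      intro E hE
      cases hE
      obtain ⟨E₀, r, h1, h2⟩ := ih (.appV b E') rfl
      refine ⟨(PCtx.appV b .hole).comp E₀, r, ?_, ?_⟩
      · rw [comp_plug]
        simp only [PCtx.plug]
        rw [h1]
      · rw [h2, ← comp_assoc]
        rfl

/-! ### Determinism and exclusivity -/

theorem value_no_tau {b t'} (h : Step (lam b) .tau t') : False := by cases h

theorem value_no_ctx {b E t'} (h : Step (lam b) (.ctx E) t') : False := by cases h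

theorem ctx_no_tau : ∀ {t l t'}, Step t l t' → ∀ E, l = .ctx E → ∀ u, Step t .tau u → False := by
  intro t l t' h
  induction h with
  | beta hv => intro E hE; cases hE
  | resetVal hv => intro E hE; cases hE
  | appL _ ih => intro E hE; cases hE
  | appR hv _ ih => intro E hE; cases hE
  | resetT _ ih => intro E hE; cases hE
  | resetCap _ ih => intro E hE; cases hE
  | lamApp hv => intro E hE; cases hE
  | shiftCap E' => intro E hE u hu; cases hu
  | @capL t0 t0' t1 E' h ih =>
      intro E hE u hu
      cases hu with
      | beta hv => exact value_no_ctx h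
      | appL h' => exact ih _ rfl _ h'
      | appR hv h' => obtain ⟨b, rfl⟩ := hv; exact value_no_ctx h
  | @capR b t t' E' h ih =>
      intro E hE u hu
      cases hu with
      | beta hv => obtain ⟨c, rfl⟩ := hv; exact value_no_ctx h
      | appL h' => exact value_no_tau h'
      | appR hv h' => exact ih _ rfl _ h'

theorem ctx_det : ∀ {t l a}, Step t l a → ∀ E, l = .ctx E → ∀ b, Step t (.ctx E) b → a = b := by
  intro t l a h
  induction h with
  | beta hv => intro E hE; cases hE
  | resetVal hv => intro E hE; cases hE
  | appL _ ih => intro E hE; cases hE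
  | appR hv _ ih => intro E hE; cases hE
  | resetT _ ih => intro E hE; cases hE
  | resetCap _ ih => intro E hE; cases hE
  | lamApp hv => intro E hE; cases hE
  | shiftCap E' =>
      intro E hE b hb
      cases hE
      cases hb
      rfl
  | @capL t0 t0' t1 E' h ih =>
      intro E hE b hb
      cases hE
      cases hb with
      | capL h' => exact ih _ rfl _ h'
      | capR h' => exact absurd h (fun h => value_no_ctx h)
  | @capR c t t' E' h ih =>
      intro E hE b hb
      cases hE
      cases hb with
      | capL h' => exact absurd h' (fun h' => value_no_ctx h')
      | capR h' => exact ih _ rfl _ h'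

theorem tau_det : ∀ {t l a}, Step t l a → l = .tau → ∀ b, Step t .tau b → a = b := by
  intro t l a h
  induction h with
  | @beta c v hv =>
      intro _ b hb
      cases hb with
      | beta hv' => rfl
      | appL h' => exact absurd h' (fun h' => value_no_tau h')
      | appR hv' h' => obtain ⟨d, rfl⟩ := hv; exact absurd h' (fun h' => value_no_tau h')
  | @resetVal v hv =>
      intro _ b hb
      cases hb with
      | resetVal hv' => rfl
      | resetT h' => obtain ⟨d, rfl⟩ := hv; exact absurd h' (fun h' => value_no_tau h')
      | resetCap h' => obtain ⟨d, rfl⟩ := hv; exact absurd h' (fun h' => value_no_ctx h')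
  | @appL t0 t0' t1 h ih =>
      intro _ b hb
      cases hb with
      | beta hv => exact absurd h (fun h => value_no_tau h)
      | appL h' => rw [ih rfl _ h']
      | appR hv h' => obtain ⟨d, rfl⟩ := hv; exact absurd h (fun h => value_no_tau h)
  | @appR v t t' hv h ih =>
      intro _ b hb
      cases hb with
      | beta hv' => obtain ⟨d, rfl⟩ := hv'; exact absurd h (fun h => value_no_tau h)
      | appL h' => obtain ⟨d, rfl⟩ := hv; exact absurd h' (fun h' => value_no_tau h')
      | appR hv' h' => rw [ih rfl _ h']
  | @resetT t t' h ih =>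
      intro _ b hb
      cases hb with
      | resetVal hv => obtain ⟨d, rfl⟩ := hv; exact absurd h (fun h => value_no_tau h)
      | resetT h' => rw [ih rfl _ h']
      | resetCap h' => exact absurd h (fun h => ctx_no_tau h' _ rfl _ h)
  | @resetCap t t' h ih =>
      intro _ b hb
      cases hb with
      | resetVal hv => obtain ⟨d, rfl⟩ := hv; exact absurd h (fun h => value_no_ctx h)
      | resetT h' => exact absurd h' (fun h' => ctx_no_tau h _ rfl _ h')
      | resetCap h' => exact ctx_det h _ rfl _ h'
  | lamApp hv => intro h; cases h
  | shiftCap E => intro h; cases h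
  | capL _ ih => intro h; cases h
  | capR _ ih => intro h; cases h

/-! ### Closedness preservation -/

theorem step_closed : ∀ {t l t'}, Step t l t' → Closed t → LabClosed l → Closed t' := by
  intro t l t' h
  induction h with
  | beta hv =>
      intro ht _
      exact subst_closedUnder ht.2 ht.1
  | resetVal hv => intro ht _; exact ht
  | appL _ ih => intro ht _; exact ⟨ih ht.1 trivial, ht.2⟩
  | appR hv h ih => intro ht _; exact ⟨ht.1, ih ht.2 trivial⟩
  | resetT _ ih => intro ht _; exact ih ht trivial
  | resetCap _ ih => intro ht _; exact ih ht trivial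
  | lamApp hv => intro ht hl; exact subst_closedUnder hl.2 ht
  | shiftCap E =>
      intro ht hl
      exact subst_closedUnder (contOf_closed hl) ht
  | capL h ih =>
      intro ht hl
      exact ih ht.1 ⟨hl, ht.2⟩
  | capR h ih =>
      intro ht hl
      exact ih ht.2 ⟨ht.1, hl⟩

theorem taustar_closed {t t'} (h : TauStar t t') (ht : Closed t) : Closed t' := by
  induction h with
  | refl => exact ht
  | tail _ h2 ih => exact step_closed h2 ih trivial

theorem weak_closed {t l t'} (h : Weak t l t') (ht : Closed t) (hl : LabClosed l) : Closed t' := by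
  cases l with
  | tau => exact taustar_closed h ht
  | val v => obtain ⟨u, h1, h2⟩ := h; exact step_closed h2 (taustar_closed h1 ht) hl
  | ctx E => obtain ⟨u, h1, h2⟩ := h; exact step_closed h2 (taustar_closed h1 ht) hl

/-! ### TauStar congruence -/

theorem taustar_app_left {a a'} (h : TauStar a a') (b : Tm) :
    TauStar (app a b) (app a' b) :=
  Relation.ReflTransGen.lift (p := fun a b => Step a .tau b) (fun t => app t b) (fun _ _ h => Step.appL h) _ _ h

theorem taustar_app_right {v b b'} (hv : IsValue v) (h : TauStar b b') :
    TauStar (app v b) (app v b') :=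
  Relation.ReflTransGen.lift (p := fun a b => Step a .tau b) (fun t => app v t) (fun _ _ h => Step.appR hv h) _ _ h

theorem taustar_reset {a a'} (h : TauStar a a') : TauStar (reset a) (reset a') :=
  Relation.ReflTransGen.lift (p := fun a b => Step a .tau b) (fun t => reset t) (fun _ _ h => Step.resetT h) _ _ h

/-! ### Red vs Step -/

theorem step_tau_ectx : ∀ (F : ECtx) {t t'}, Step t .tau t' →
    Step (F.plug t) .tau (F.plug t') := by
  intro F
  induction F with
  | hole => intro t t' h; exact h
  | appV b F ih => intro t t' h; exact ih (Step.appR ⟨b, rfl⟩ h)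
  | appL F s ih => intro t t' h; exact ih (Step.appL h)
  | resetC F ih => intro t t' h; exact ih (Step.resetT h)

theorem red_step {t u} (h : Red t u) : Step t .tau u := by
  cases h with
  | beta F t v hv => exact step_tau_ectx F (Step.beta hv)
  | cap F E t =>
      apply step_tau_ectx F
      apply Step.resetCap
      have := can_shift E t .hole
      rwa [comp_hole_left] at this
  | res F v hv => exact step_tau_ectx F (Step.resetVal hv)

def ecomp : ECtx → ECtx → ECtx
  | F, .hole => F
  | F, .appV b F' => .appV b (ecomp F F')
  | F, .appL F' s => .appL (ecomp F F') s
  | F, .resetC F' => .resetC (ecomp F F')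

theorem ecomp_plug : ∀ (F' F : ECtx) (t : Tm), (ecomp F F').plug t = F.plug (F'.plug t) := by
  intro F'
  induction F' with
  | hole => intro F t; rfl
  | appV b F' ih => intro F t; exact ih F (app (lam b) t)
  | appL F' s ih => intro F t; exact ih F (app t s)
  | resetC F' ih => intro F t; exact ih F (reset t)

theorem red_in_ectx {a a'} (h : Red a a') (G : ECtx) : Red (G.plug a) (G.plug a') := by
  cases h with
  | beta F t v hv =>
      rw [← ecomp_plug F G, ← ecomp_plug F G]
      exact Red.beta (ecomp G F) t v hv
  | cap F E t =>
      rw [← ecomp_plug F G, ← ecomp_plug F G]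
      exact Red.cap (ecomp G F) E t
  | res F v hv =>
      rw [← ecomp_plug F G, ← ecomp_plug F G]
      exact Red.res (ecomp G F) v hv

theorem step_red : ∀ {t l u}, Step t l u → l = .tau → Red t u := by
  intro t l u h
  induction h with
  | beta hv => intro _; exact Red.beta .hole _ _ hv
  | resetVal hv => intro _; exact Red.res .hole _ hv
  | @appL t0 t0' t1 h ih => intro _; exact red_in_ectx (ih rfl) (.appL .hole t1)
  | @appR v t t' hv h ih =>
      intro _
      obtain ⟨b, rfl⟩ := hv
      exact red_in_ectx (ih rfl) (.appV b .hole)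
  | resetT h ih => intro _; exact red_in_ectx (ih rfl) (.resetC .hole)
  | @resetCap t t' h ih =>
      intro _
      obtain ⟨E₀, r, rfl, rfl⟩ := step_ctx_charac h .hole rfl
      rw [comp_hole_left]
      exact Red.cap .hole E₀ r
  | lamApp hv => intro h; cases h
  | shiftCap E => intro h; cases h
  | capL _ ih => intro h; cases h
  | capR _ ih => intro h; cases h

theorem redstar_iff_taustar {t u} : RedStar t u ↔ TauStar t u := by
  constructor
  · intro h; exact Relation.ReflTransGen.lift (p := fun a b => Step a .tau b) id (fun _ _ h => red_step h) _ _ h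
  · intro h; exact Relation.ReflTransGen.lift (p := Red) id (fun _ _ h => step_red h rfl) _ _ h

/-! ### Progress for stuck terms -/

theorem progress : ∀ t, Closed t → ¬ IsValue t → (∀ u, ¬ Red t u) →
    ∃ E r, t = PCtx.plug E (shift r) := by
  intro t
  induction t with
  | var k => intro hc; exact absurd hc (by simp [Closed, ClosedUnder])
  | lam b => intro _ hv; exact absurd ⟨b, rfl⟩ hv
  | app a b iha ihb =>
      intro hc hv hr
      by_cases hva : IsValue a
      · obtain ⟨c, rfl⟩ := hva
        by_cases hvb : IsValue b
        · exact absurd (Red.beta .hole c b hvb) (hr _)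
        · by_cases hrb : ∃ u, Red b u
          · obtain ⟨u, hu⟩ := hrb
            exact absurd (red_in_ectx hu (.appV c .hole)) (hr _)
          · obtain ⟨E, r, rfl⟩ := ihb hc.2 hvb (fun u hu => hrb ⟨u, hu⟩)
            refine ⟨(PCtx.appV c .hole).comp E, r, ?_⟩
            rw [comp_plug]
            rfl
      · by_cases hra : ∃ u, Red a u
        · obtain ⟨u, hu⟩ := hra
          exact absurd (red_in_ectx hu (.appL .hole b)) (hr _)
        · obtain ⟨E, r, rfl⟩ := iha hc.1 hva (fun u hu => hra ⟨u, hu⟩)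
          refine ⟨(PCtx.appL .hole b).comp E, r, ?_⟩
          rw [comp_plug]
          rfl
  | shift r ih => intro _ _ _; exact ⟨.hole, r, rfl⟩
  | reset t ih =>
      intro hc hv hr
      exfalso
      by_cases hvt : IsValue t
      · exact hr _ (Red.res .hole t hvt)
      · by_cases hrt : ∃ u, Red t u
        · obtain ⟨u, hu⟩ := hrt
          exact hr _ (red_in_ectx hu (.resetC .hole))
        · obtain ⟨E, r, rfl⟩ := ih hc hvt (fun u hu => hrt ⟨u, hu⟩)
          exact hr _ (Red.cap .hole E r)
/-! ### Bisimilarity facts -/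

theorem step_val_inv : ∀ {t v t'}, Step t (.val v) t' → ∃ b, t = lam b ∧ t' = substT 0 v b := by
  intro t v t' h
  cases h with
  | lamApp hv => exact ⟨_, rfl, rfl⟩

theorem taustar_lam_eq {b u} (h : TauStar (lam b) u) : u = lam b := by
  rcases Relation.ReflTransGen.cases_head h with h | ⟨c, hc, _⟩
  · exact h.symm
  · exact absurd hc (fun hc => value_no_tau hc)

theorem isSim_taustar {R : Tm → Tm → Prop} (hR : IsSim R) :
    ∀ {t0 t0'}, TauStar t0 t0' → ∀ {t1}, R t0 t1 → ∃ t1', TauStar t1 t1' ∧ R t0' t1' := by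
  intro t0 t0' h
  induction h with
  | refl => exact fun h1 => ⟨_, Relation.ReflTransGen.refl, h1⟩
  | tail _ h2 ih =>
      intro t1 h1
      obtain ⟨u, hu1, hu2⟩ := ih h1
      obtain ⟨t1', h1', h2'⟩ := hR hu2 h2
      exact ⟨t1', Relation.ReflTransGen.trans hu1 h1', h2'⟩

theorem isSim_weak {R : Tm → Tm → Prop} (hR : IsSim R) :
    ∀ {t0 l t0' t1}, R t0 t1 → Weak t0 l t0' → ∃ t1', Weak t1 l t1' ∧ R t0' t1' := by
  intro t0 l t0' t1 h hw
  cases l with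
  | tau => exact isSim_taustar hR hw h
  | val v =>
      obtain ⟨u, hu1, hu2⟩ := hw
      obtain ⟨u', hu1', hu2'⟩ := isSim_taustar hR hu1 h
      obtain ⟨t1', h1', h2'⟩ := hR hu2' hu2
      obtain ⟨w, hw1, hw2⟩ := h1'
      exact ⟨t1', ⟨w, Relation.ReflTransGen.trans hu1' hw1, hw2⟩, h2'⟩
  | ctx E =>
      obtain ⟨u, hu1, hu2⟩ := hw
      obtain ⟨u', hu1', hu2'⟩ := isSim_taustar hR hu1 h
      obtain ⟨t1', h1', h2'⟩ := hR hu2' hu2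
      obtain ⟨w, hw1, hw2⟩ := h1'
      exact ⟨t1', ⟨w, Relation.ReflTransGen.trans hu1' hw1, hw2⟩, h2'⟩

theorem bisim_sim {t0 t1} (h : Bisim t0 t1) :
    ∀ {l t0'}, Step t0 l t0' → ∃ t1', Weak t1 l t1' ∧ Bisim t0' t1' := by
  obtain ⟨R, hR, hr⟩ := h
  intro l t0' hs
  obtain ⟨t1', h1, h2⟩ := hR.1 hr hs
  exact ⟨t1', h1, ⟨R, hR, h2⟩⟩

theorem bisim_weak {t0 t1} (h : Bisim t0 t1) :
    ∀ {l t0'}, Weak t0 l t0' → ∃ t1', Weak t1 l t1' ∧ Bisim t0' t1' := by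
  obtain ⟨R, hR, hr⟩ := h
  intro l t0' hs
  obtain ⟨t1', h1, h2⟩ := isSim_weak hR.1 hr hs
  exact ⟨t1', h1, ⟨R, hR, h2⟩⟩

theorem bisim_symm {t0 t1} (h : Bisim t0 t1) : Bisim t1 t0 := by
  obtain ⟨R, hR, hr⟩ := h
  exact ⟨flip R, ⟨hR.2, hR.1⟩, hr⟩

theorem bisim_trans {t0 t1 t2} (h1 : Bisim t0 t1) (h2 : Bisim t1 t2) : Bisim t0 t2 := by
  refine ⟨fun a c => ∃ b, Bisim a b ∧ Bisim b c, ⟨?_, ?_⟩, t1, h1, h2⟩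
  · rintro a c ⟨b, hab, hbc⟩ l a' ha
    obtain ⟨b', hb1, hb2⟩ := bisim_sim hab ha
    obtain ⟨c', hc1, hc2⟩ := bisim_weak hbc hb1
    exact ⟨c', hc1, b', hb2, hc2⟩
  · rintro c a ⟨b, hab, hbc⟩ l c' hc
    obtain ⟨b', hb1, hb2⟩ := bisim_sim (bisim_symm hbc) hc
    obtain ⟨a', ha1, ha2⟩ := bisim_weak (bisim_symm hab) hb1
    exact ⟨a', ha1, b', bisim_symm ha2, bisim_symm hb2⟩

theorem bisim_tau {p q} (h : Step p .tau q) : Bisim p q := by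
  have hsim : ∀ a b, (TauStar a b ∨ TauStar b a) → ∀ l a', Step a l a' →
      ∃ b', Weak b l b' ∧ (TauStar a' b' ∨ TauStar b' a') := by
    intro a b hab l a' ha
    rcases hab with hab | hba
    · rcases Relation.ReflTransGen.cases_head hab with rfl | ⟨c, hac, hcb⟩
      · exact ⟨a', weak_of_step ha, Or.inl Relation.ReflTransGen.refl⟩
      · cases l with
        | tau =>
            have : a' = c := tau_det ha rfl _ hac
            subst this
            exact ⟨b, Relation.ReflTransGen.refl, Or.inl hcb⟩
        | val v =>
            obtain ⟨d, rfl, _⟩ := step_val_inv ha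
            exact absurd hac (fun h => value_no_tau h)
        | ctx E => exact absurd (ctx_no_tau ha E rfl _ hac) (fun h => h)
    · refine ⟨a', ?_, Or.inl Relation.ReflTransGen.refl⟩
      cases l with
      | tau => exact Relation.ReflTransGen.tail hba ha
      | val v => exact ⟨a, hba, ha⟩
      | ctx E => exact ⟨a, hba, ha⟩
  refine ⟨fun a b => TauStar a b ∨ TauStar b a, ⟨?_, ?_⟩, Or.inl (Relation.ReflTransGen.single h)⟩
  · intro a b hab l a' ha
    exact hsim a b hab l a' ha
  · intro a b hab l a' ha
    obtain ⟨b', h1, h2⟩ := hsim a b (Or.symm hab) l a' ha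
    exact ⟨b', h1, Or.symm h2⟩

theorem bisim_taustar_right {p q q'} (h : Bisim p q) (hq : TauStar q q') : Bisim p q' := by
  induction hq with
  | refl => exact h
  | tail _ h2 ih => exact bisim_trans ih (bisim_tau h2)

theorem openext_of_bisim_closed {t0 t1} (h0 : Closed t0) (h1 : Closed t1) (h : Bisim t0 t1) :
    OpenExt Bisim t0 t1 := by
  intro σ hσ
  rw [applySub_closed σ h0, applySub_closed σ h1]
  exact h

theorem bisim_of_openext_closed {t0 t1} (h0 : Closed t0) (h1 : Closed t1)
    (h : OpenExt Bisim t0 t1) : Bisim t0 t1 := by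
  have := h sid closingSub_sid
  rwa [applySub_closed sid h0, applySub_closed sid h1] at this

theorem howe_of_bisim_closed {t0 t1} (h0 : Closed t0) (h1 : Closed t1) (h : Bisim t0 t1) :
    Howe t0 t1 :=
  Howe.base (openext_of_bisim_closed h0 h1 h)

theorem openext_lam_of_bisim {b0 b1} (h : Bisim (lam b0) (lam b1))
    (hc0 : ClosedUnder 1 b0) (hc1 : ClosedUnder 1 b1) : OpenExt Bisim b0 b1 := by
  intro σ hσ
  have hv : IsValue (σ 0) := (hσ 0).1
  have hc : Closed (σ 0) := (hσ 0).2
  have heq : ∀ {b}, ClosedUnder 1 b → applySub σ b = substT 0 (σ 0) b := by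
    intro b hb
    rw [substT0_eq hc]
    apply applySub_congrUnder hb
    intro k hk
    match k, hk with
    | 0, _ => rfl
  rw [heq hc0, heq hc1]
  obtain ⟨t1', h1, h2⟩ := bisim_sim h (Step.lamApp (t := b0) hv)
  obtain ⟨u, hu1, hu2⟩ := h1
  have := taustar_lam_eq hu1
  subst this
  obtain ⟨b, hb, hb'⟩ := step_val_inv hu2
  cases hb
  rw [hb'] at h2
  exact h2
/-! ### The key lemma -/

def GoodLab : Label → Label → Prop
  | .tau, .tau => True
  | .val v, .val v' => v = v' ∧ IsValue v ∧ Closed v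
  | .ctx E, .ctx E' => PCtxHowe E E' ∧ PClosedUnder 0 E ∧ PClosedUnder 0 E'
  | _, _ => False

theorem goodLab_closed_left : ∀ {l l'}, GoodLab l l' → LabClosed l := by
  intro l l' hg
  cases l <;> cases l' <;> first
    | trivial
    | exact hg.elim
    | exact ⟨hg.2.1, hg.2.2⟩
    | (obtain ⟨rfl, h1, h2⟩ := hg; exact ⟨h1, h2⟩)
    | exact hg.2.1

theorem goodLab_closed_right : ∀ {l l'}, GoodLab l l' → LabClosed l' := by
  intro l l' hg
  cases l <;> cases l' <;> first
    | trivial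
    | exact hg.elim
    | (obtain ⟨rfl, h1, h2⟩ := hg; exact ⟨h1, h2⟩)
    | exact hg.2.2

def KeyStmt (n : ℕ) : Prop :=
  ∀ t0 l t0', Step t0 l t0' → ∀ t1, HoweN n t0 t1 → Closed t0 → Closed t1 →
    ∀ l', GoodLab l l' → ∃ t1', Weak t1 l' t1' ∧ HoweC t0' t1'

theorem key_base {t0 t1 l t0' l'} (hb : Bisim t0 t1) (hc0 : Closed t0) (hc1 : Closed t1)
    (hs : Step t0 l t0') (hg : GoodLab l l') :
    ∃ t1', Weak t1 l' t1' ∧ HoweC t0' t1' := by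
  cases l with
  | tau =>
      cases l' with
      | tau =>
          obtain ⟨t1', hw, hb'⟩ := bisim_sim hb hs
          have hc0' : Closed t0' := step_closed hs hc0 trivial
          have hc1' : Closed t1' := weak_closed hw hc1 trivial
          exact ⟨t1', hw, hc0', hc1', howe_of_bisim_closed hc0' hc1' hb'⟩
      | val v => exact hg.elim
      | ctx E => exact hg.elim
  | val v =>
      cases l' with
      | tau => exact hg.elim
      | val v' =>
          obtain ⟨rfl, hvv, hvc⟩ := hg
          obtain ⟨t1', hw, hb'⟩ := bisim_sim hb hs
          have hc0' : Closed t0' := step_closed hs hc0 ⟨hvv, hvc⟩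
          have hc1' : Closed t1' := weak_closed hw hc1 ⟨hvv, hvc⟩
          exact ⟨t1', hw, hc0', hc1', howe_of_bisim_closed hc0' hc1' hb'⟩
      | ctx E => exact hg.elim
  | ctx E =>
      cases l' with
      | tau => exact hg.elim
      | val v => exact hg.elim
      | ctx E' =>
          obtain ⟨hEE', hE, hE'⟩ := hg
          obtain ⟨E₀, r, rfl, rfl⟩ := step_ctx_charac hs E rfl
          have hdec := (plug_closed_iff E₀ (shift r) 0).mp hc0
          have hE₀ : PClosedUnder 0 E₀ := hdec.1
          have hr : ClosedUnder 1 r := hdec.2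
          have hs' := can_shift E₀ r E'
          obtain ⟨t1', hw, hb'⟩ := bisim_sim hb hs'
          have hcontE : Closed (contOf (E.comp E₀)) := contOf_closed (pclosed_comp hE hE₀)
          have hcontE' : Closed (contOf (E'.comp E₀)) := contOf_closed (pclosed_comp hE' hE₀)
          have hc0' : Closed (reset (substT 0 (contOf (E.comp E₀)) r)) :=
            subst_closedUnder hcontE hr
          have hc0'' : Closed (reset (substT 0 (contOf (E'.comp E₀)) r)) :=
            subst_closedUnder hcontE' hr
          have hc1' : Closed t1' := weak_closed hw hc1 hE'
          have hhowe : Howe (reset (substT 0 (contOf (E.comp E₀)) r))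
              (reset (substT 0 (contOf (E'.comp E₀)) r)) :=
            Howe.compReset (howe_subst (howe_refl r)
              (contOf_howe (pctxHowe_comp hEE' (pctxHowe_refl E₀)))
              (contOf_value _) (contOf_value _) hcontE hcontE')
          refine ⟨t1', hw, hc0', hc1', Howe.right hhowe ?_⟩
          exact openext_of_bisim_closed hc0'' hc1' hb'

theorem key_right_case {m : ℕ} (ih : KeyStmt m) {t0 l t0' t2 t1}
    (hstep : Step t0 l t0') (h' : HoweN m t0 t2) (hopen : OpenExt Bisim t2 t1)
    (hc0 : Closed t0) (hc1 : Closed t1) (l' : Label) (hg : GoodLab l l') :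
    ∃ t1', Weak t1 l' t1' ∧ HoweC t0' t1' := by
  have hgood := goodSub_of_closing closingSub_sid
  have h2 : HoweN m t0 (applySub sid t2) := by
    have := howeN_substSame h' hgood
    rwa [applySub_closed sid hc0] at this
  have hc2 : Closed (applySub sid t2) := applySub_closing closingSub_sid
  have hbis : Bisim (applySub sid t2) t1 := by
    have := hopen sid closingSub_sid
    rwa [applySub_closed sid hc1] at this
  obtain ⟨u, hw, huc⟩ := ih t0 l t0' hstep _ h2 hc0 hc2 l' hg
  obtain ⟨t1', hw1, hb1⟩ := bisim_weak hbis hw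
  have hc1' : Closed t1' := weak_closed hw1 hc1 (goodLab_closed_right hg)
  exact ⟨t1', hw1, huc.1, hc1',
    Howe.right huc.2.2 (openext_of_bisim_closed huc.2.1 hc1' hb1)⟩

/-- Value lemma: anything Howe-related to a λ-abstraction evaluates to a
    Howe-related λ-abstraction. -/
theorem howeN_value : ∀ n {b A}, HoweN n (lam b) A → ClosedUnder 1 b → Closed A →
    ∃ b', TauStar A (lam b') ∧ ClosedUnder 1 b' ∧ Howe b b' := by
  intro n
  induction n using Nat.strong_induction_on with
  | _ n ihn =>
    intro b A h hb hA
    cases h with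
    | base hopen =>
        have hbis : Bisim (lam b) A := bisim_of_openext_closed hb hA hopen
        obtain ⟨t1', hw, hbis'⟩ := bisim_sim hbis (Step.lamApp (t := b) (v := lam (var 0)) ⟨_, rfl⟩)
        obtain ⟨u, hu1, hu2⟩ := hw
        obtain ⟨b', rfl, _⟩ := step_val_inv hu2
        have hb' : ClosedUnder 1 b' := taustar_closed hu1 hA
        have hbis2 : Bisim (lam b) (lam b') := bisim_taustar_right hbis hu1
        exact ⟨b', hu1, hb', Howe.base (openext_lam_of_bisim hbis2 hb hb')⟩
    | @right m _ t2 _ h' hopen =>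
        have hgood := goodSub_of_closing closingSub_sid
        have h2 : HoweN m (lam b) (applySub sid t2) := by
          have := howeN_substSame h' hgood
          rwa [applySub_closed sid (show Closed (lam b) from hb)] at this
        have hc2 : Closed (applySub sid t2) := applySub_closing closingSub_sid
        have hbis : Bisim (applySub sid t2) A := by
          have := hopen sid closingSub_sid
          rwa [applySub_closed sid hA] at this
        obtain ⟨b2, hst2, hcb2, hw2⟩ := ihn _ (by omega) h2 hb hc2
        -- (lam b2) is weakly reachable from t2c, transfer along hbis
        have hwk : Weak (applySub sid t2) (.val (lam (var 0))) (substT 0 (lam (var 0)) b2) :=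
          ⟨lam b2, hst2, Step.lamApp ⟨_, rfl⟩⟩
        obtain ⟨r, hwr, hbr⟩ := bisim_weak hbis hwk
        obtain ⟨u, hu1, hu2⟩ := hwr
        obtain ⟨b1, rfl, _⟩ := step_val_inv hu2
        have hb1 : ClosedUnder 1 b1 := taustar_closed hu1 hA
        have hbis2 : Bisim (lam b2) (lam b1) := by
          have h3 : Bisim (lam b2) A :=
            bisim_symm (bisim_taustar_right (bisim_symm hbis) hst2)
          exact bisim_taustar_right h3 hu1
        exact ⟨b1, hu1, hb1, Howe.right hw2 (openext_lam_of_bisim hbis2 hcb2 hb1)⟩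
    | compLam h' =>
        exact ⟨_, Relation.ReflTransGen.refl, hA, howe_of_howeN h'⟩

theorem key : ∀ n, KeyStmt n := by
  intro n
  induction n using Nat.strong_induction_on with
  | _ n ihn =>
    intro t0 l t0' hstep
    induction hstep with
    | @beta t v hv =>
        intro t1 h hc0 hc1 l' hg
        cases l' with
        | val v => exact hg.elim
        | ctx E => exact hg.elim
        | tau =>
        cases h with
        | base hopen =>
            exact key_base (bisim_of_openext_closed hc0 hc1 hopen) hc0 hc1 (Step.beta hv) hg
        | right h' hopen =>
            exact key_right_case (ihn _ (by omega)) (Step.beta hv) h' hopen hc0 hc1 _ hg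
        | compApp hA hB =>
            obtain ⟨c, rfl⟩ := hv
            obtain ⟨b1, hstA, hcb1, hwb1⟩ := howeN_value _ hA hc0.1 hc1.1
            obtain ⟨c1, hstB, hcc1, hwc1⟩ := howeN_value _ hB hc0.2 hc1.2
            refine ⟨substT 0 (lam c1) b1, ?_, ?_, ?_, ?_⟩
            · refine Relation.ReflTransGen.tail (Relation.ReflTransGen.trans
                (taustar_app_left hstA _)
                (taustar_app_right ⟨b1, rfl⟩ hstB)) (Step.beta ⟨c1, rfl⟩)
            · exact subst_closedUnder hc0.2 hc0.1
            · exact subst_closedUnder hcc1 hcb1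
            · exact howe_subst hwb1 (Howe.compLam hwc1) ⟨c, rfl⟩ ⟨c1, rfl⟩ hc0.2 hcc1
    | @resetVal v hv =>
        intro t1 h hc0 hc1 l' hg
        cases l' with
        | val v => exact hg.elim
        | ctx E => exact hg.elim
        | tau =>
        cases h with
        | base hopen =>
            exact key_base (bisim_of_openext_closed hc0 hc1 hopen) hc0 hc1 (Step.resetVal hv) hg
        | right h' hopen =>
            exact key_right_case (ihn _ (by omega)) (Step.resetVal hv) h' hopen hc0 hc1 _ hg
        | compReset hB =>
            obtain ⟨c, rfl⟩ := hv
            obtain ⟨c1, hstB, hcc1, hwc1⟩ := howeN_value _ hB hc0 hc1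
            refine ⟨lam c1, ?_, hc0, hcc1, Howe.compLam hwc1⟩
            exact Relation.ReflTransGen.tail (taustar_reset hstB) (Step.resetVal ⟨c1, rfl⟩)
    | @appL a a' b hsub ih =>
        intro t1 h hc0 hc1 l' hg
        cases l' with
        | val v => exact hg.elim
        | ctx E => exact hg.elim
        | tau =>
        cases h with
        | base hopen =>
            exact key_base (bisim_of_openext_closed hc0 hc1 hopen) hc0 hc1 (Step.appL hsub) hg
        | right h' hopen =>
            exact key_right_case (ihn _ (by omega)) (Step.appL hsub) h' hopen hc0 hc1 _ hg
        | compApp hA hB =>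
            obtain ⟨u, hw, hcu0, hcu1, hwu⟩ := ih _ hA hc0.1 hc1.1 .tau trivial
            refine ⟨app u _, taustar_app_left hw _, ⟨hcu0, hc0.2⟩, ⟨hcu1, hc1.2⟩, ?_⟩
            exact Howe.compApp hwu (howe_of_howeN hB)
    | @appR v b b' hv hsub ih =>
        intro t1 h hc0 hc1 l' hg
        cases l' with
        | val v => exact hg.elim
        | ctx E => exact hg.elim
        | tau =>
        cases h with
        | base hopen =>
            exact key_base (bisim_of_openext_closed hc0 hc1 hopen) hc0 hc1 (Step.appR hv hsub) hg
        | right h' hopen =>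
            exact key_right_case (ihn _ (by omega)) (Step.appR hv hsub) h' hopen hc0 hc1 _ hg
        | compApp hA hB =>
            obtain ⟨c, rfl⟩ := hv
            obtain ⟨c1, hstA, hcc1, hwc1⟩ := howeN_value _ hA hc0.1 hc1.1
            obtain ⟨u, hw, hcu0, hcu1, hwu⟩ := ih _ hB hc0.2 hc1.2 .tau trivial
            refine ⟨app (lam c1) u, ?_, ⟨hc0.1, hcu0⟩, ⟨hcc1, hcu1⟩, ?_⟩
            · exact Relation.ReflTransGen.trans (taustar_app_left hstA _)
                (taustar_app_right ⟨c1, rfl⟩ hw)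
            · exact Howe.compApp (Howe.compLam hwc1) hwu
    | @resetT b b' hsub ih =>
        intro t1 h hc0 hc1 l' hg
        cases l' with
        | val v => exact hg.elim
        | ctx E => exact hg.elim
        | tau =>
        cases h with
        | base hopen =>
            exact key_base (bisim_of_openext_closed hc0 hc1 hopen) hc0 hc1 (Step.resetT hsub) hg
        | right h' hopen =>
            exact key_right_case (ihn _ (by omega)) (Step.resetT hsub) h' hopen hc0 hc1 _ hg
        | compReset hB =>
            obtain ⟨u, hw, hcu0, hcu1, hwu⟩ := ih _ hB hc0 hc1 .tau trivial
            exact ⟨reset u, taustar_reset hw, hcu0, hcu1, Howe.compReset hwu⟩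
    | @resetCap b b' hsub ih =>
        intro t1 h hc0 hc1 l' hg
        cases l' with
        | val v => exact hg.elim
        | ctx E => exact hg.elim
        | tau =>
        cases h with
        | base hopen =>
            exact key_base (bisim_of_openext_closed hc0 hc1 hopen) hc0 hc1 (Step.resetCap hsub) hg
        | right h' hopen =>
            exact key_right_case (ihn _ (by omega)) (Step.resetCap hsub) h' hopen hc0 hc1 _ hg
        | compReset hB =>
            obtain ⟨u, hw, hcu0, hcu1, hwu⟩ := ih _ hB hc0 hc1 (.ctx .hole)
              ⟨PCtxHowe.hole, trivial, trivial⟩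
            obtain ⟨m, hm1, hm2⟩ := hw
            refine ⟨u, ?_, hcu0, hcu1, hwu⟩
            exact Relation.ReflTransGen.tail (taustar_reset hm1) (Step.resetCap hm2)
    | @lamApp b v hv =>
        intro t1 h hc0 hc1 l' hg
        cases l' with
        | tau => exact hg.elim
        | ctx E => exact hg.elim
        | val v' =>
        obtain ⟨rfl, hvv, hvc⟩ := hg
        cases h with
        | base hopen =>
            exact key_base (bisim_of_openext_closed hc0 hc1 hopen) hc0 hc1 (Step.lamApp hv)
              ⟨rfl, hvv, hvc⟩
        | right h' hopen =>
            exact key_right_case (ihn _ (by omega)) (Step.lamApp hv) h' hopen hc0 hc1 _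
              ⟨rfl, hvv, hvc⟩
        | compLam hB =>
            refine ⟨_, weak_of_step (Step.lamApp hvv), ?_, ?_, ?_⟩
            · exact subst_closedUnder hvc hc0
            · exact subst_closedUnder hvc hc1
            · exact howe_subst (howe_of_howeN hB) (howe_refl _) hvv hvv hvc hvc
    | @shiftCap r E =>
        intro t1 h hc0 hc1 l' hg
        cases l' with
        | tau => exact hg.elim
        | val v => exact hg.elim
        | ctx E' =>
        obtain ⟨hEE', hE, hE'⟩ := hg
        cases h with
        | base hopen =>
            exact key_base (bisim_of_openext_closed hc0 hc1 hopen) hc0 hc1 (Step.shiftCap E)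
              ⟨hEE', hE, hE'⟩
        | right h' hopen =>
            exact key_right_case (ihn _ (by omega)) (Step.shiftCap E) h' hopen hc0 hc1 _
              ⟨hEE', hE, hE'⟩
        | compShift hB =>
            refine ⟨_, weak_of_step (Step.shiftCap E'), ?_, ?_, ?_⟩
            · exact subst_closedUnder (contOf_closed hE) hc0
            · exact subst_closedUnder (contOf_closed hE') hc1
            · exact Howe.compReset (howe_subst (howe_of_howeN hB) (contOf_howe hEE')
                (contOf_value _) (contOf_value _) (contOf_closed hE) (contOf_closed hE'))
    | @capL a a' b E hsub ih =>
        intro t1 h hc0 hc1 l' hg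
        cases l' with
        | tau => exact hg.elim
        | val v => exact hg.elim
        | ctx E' =>
        obtain ⟨hEE', hE, hE'⟩ := hg
        cases h with
        | base hopen =>
            exact key_base (bisim_of_openext_closed hc0 hc1 hopen) hc0 hc1 (Step.capL hsub)
              ⟨hEE', hE, hE'⟩
        | right h' hopen =>
            exact key_right_case (ihn _ (by omega)) (Step.capL hsub) h' hopen hc0 hc1 _
              ⟨hEE', hE, hE'⟩
        | @compApp _ _ A _ B hA hB =>
            obtain ⟨u, hw, hcu0, hcu1, hwu⟩ := ih _ hA hc0.1 hc1.1 (.ctx (.appL E' B))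
              ⟨PCtxHowe.appL hEE' (howe_of_howeN hB), ⟨hE, hc0.2⟩, ⟨hE', hc1.2⟩⟩
            obtain ⟨m, hm1, hm2⟩ := hw
            exact ⟨u, ⟨app m B, taustar_app_left hm1 _, Step.capL hm2⟩, hcu0, hcu1, hwu⟩
    | @capR c b b' E hsub ih =>
        intro t1 h hc0 hc1 l' hg
        cases l' with
        | tau => exact hg.elim
        | val v => exact hg.elim
        | ctx E' =>
        obtain ⟨hEE', hE, hE'⟩ := hg
        cases h with
        | base hopen =>
            exact key_base (bisim_of_openext_closed hc0 hc1 hopen) hc0 hc1 (Step.capR hsub)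
              ⟨hEE', hE, hE'⟩
        | right h' hopen =>
            exact key_right_case (ihn _ (by omega)) (Step.capR hsub) h' hopen hc0 hc1 _
              ⟨hEE', hE, hE'⟩
        | @compApp _ _ A _ B hA hB =>
            obtain ⟨c1, hstA, hcc1, hwc1⟩ := howeN_value _ hA hc0.1 hc1.1
            obtain ⟨u, hw, hcu0, hcu1, hwu⟩ := ih _ hB hc0.2 hc1.2 (.ctx (.appV c1 E'))
              ⟨PCtxHowe.appV hwc1 hEE', ⟨hc0.1, hE⟩, ⟨hcc1, hE'⟩⟩
            obtain ⟨m, hm1, hm2⟩ := hw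
            refine ⟨u, ⟨app (lam c1) m, ?_, Step.capR hm2⟩, hcu0, hcu1, hwu⟩
            exact Relation.ReflTransGen.trans (taustar_app_left hstA _)
              (taustar_app_right ⟨c1, rfl⟩ hm1)
/-! ### Final assembly -/

theorem ctx_plug_closed : ∀ (C : Ctx) {n t}, CtxClosedUnder n C → Closed t →
    ClosedUnder n (Ctx.plug C t) := by
  intro C
  induction C with
  | hole => intro n t _ ht; exact closedUnder_mono ht (by omega)
  | lam C ih => intro n t hC ht; exact ih hC ht
  | appL C s ih => intro n t hC ht; exact ⟨ih hC.1 ht, hC.2⟩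
  | appR s C ih => intro n t hC ht; exact ⟨hC.1, ih hC.2 ht⟩
  | shift C ih => intro n t hC ht; exact ih hC ht
  | reset C ih => intro n t hC ht; exact ih hC ht

theorem howeC_step {a b l a' l'} (h : HoweC a b) (hs : Step a l a') (hg : GoodLab l l') :
    ∃ b', Weak b l' b' ∧ HoweC a' b' := by
  obtain ⟨hca, hcb, hw⟩ := h
  obtain ⟨n, hn⟩ := howeN_of_howe hw
  exact key n _ _ _ hs _ hn hca hcb l' hg

theorem howeC_taustar {a a'} (hst : TauStar a a') : ∀ {b}, HoweC a b →
    ∃ b', TauStar b b' ∧ HoweC a' b' := by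
  induction hst with
  | refl => exact fun h => ⟨_, Relation.ReflTransGen.refl, h⟩
  | tail _ h2 ih =>
      intro b h
      obtain ⟨u, hu1, hu2⟩ := ih h
      obtain ⟨b', hb1, hb2⟩ := howeC_step hu2 h2 (l' := .tau) trivial
      exact ⟨b', Relation.ReflTransGen.trans hu1 hb1, hb2⟩

theorem evalsToValue_iff {t} : EvalsToValue t ↔ ∃ b, TauStar t (lam b) := by
  constructor
  · rintro ⟨v, ⟨b, rfl⟩, hred, _⟩
    exact ⟨b, redstar_iff_taustar.mp hred⟩
  · rintro ⟨b, hst⟩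
    refine ⟨lam b, ⟨b, rfl⟩, redstar_iff_taustar.mpr hst, ?_⟩
    intro u hu
    exact value_no_tau (red_step hu)

theorem stuck_of_ctx_step {m E u} (h : Step m (.ctx E) u) : Stuck m := by
  constructor
  · rintro ⟨b, rfl⟩
    exact value_no_ctx h
  · intro w hw
    exact ctx_no_tau h E rfl w (red_step hw)

theorem howeC_value_transfer {T0 T1} (h : HoweC T0 T1) (hv : EvalsToValue T0) :
    EvalsToValue T1 := by
  obtain ⟨b, hst⟩ := evalsToValue_iff.mp hv
  obtain ⟨u, hu1, hu2⟩ := howeC_taustar hst h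
  have hcl : Closed (lam (var 0)) := by simp [Closed, ClosedUnder]
  obtain ⟨r, hr1, _⟩ := howeC_step hu2 (Step.lamApp (t := b) (v := lam (var 0)) ⟨_, rfl⟩)
    (l' := .val (lam (var 0))) ⟨rfl, ⟨_, rfl⟩, hcl⟩
  obtain ⟨w, hw1, hw2⟩ := hr1
  obtain ⟨b1, rfl, _⟩ := step_val_inv hw2
  exact evalsToValue_iff.mpr ⟨b1, Relation.ReflTransGen.trans hu1 hw1⟩

theorem howeC_stuck_transfer {T0 T1} (h : HoweC T0 T1) (hv : EvalsToStuck T0) :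
    EvalsToStuck T1 := by
  obtain ⟨s, hstuck, hred, _⟩ := hv
  have hst : TauStar T0 s := redstar_iff_taustar.mp hred
  have hcs : Closed s := taustar_closed hst h.1
  obtain ⟨E, r, rfl⟩ := progress s hcs hstuck.1 hstuck.2
  obtain ⟨u, hu1, hu2⟩ := howeC_taustar hst h
  obtain ⟨r', hr1, _⟩ := howeC_step hu2 (can_shift E r .hole)
    (l' := .ctx .hole) ⟨PCtxHowe.hole, trivial, trivial⟩
  obtain ⟨m, hm1, hm2⟩ := hr1
  refine ⟨m, stuck_of_ctx_step hm2, ?_, ?_⟩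
  · exact redstar_iff_taustar.mpr (Relation.ReflTransGen.trans hu1 hm1)
  · intro w hw
    exact ctx_no_tau hm2 .hole rfl w (red_step hw)

end LamS
open LamS LamS.Tm in
/-- soundness of applicative bisimilarity w.r.t. contextual
    equivalence. -/
theorem bisim_sound :
    ∀ t0 t1 : Tm, Closed t0 → Closed t1 → Bisim t0 t1 → CtxEquiv t0 t1 := by
  intro t0 t1 hc0 hc1 hb C hC
  have hcp0 : Closed (C.plug t0) := ctx_plug_closed C hC hc0
  have hcp1 : Closed (C.plug t1) := ctx_plug_closed C hC hc1
  have h01 : HoweC (C.plug t0) (C.plug t1) :=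
    ⟨hcp0, hcp1, howe_ctx C (howe_of_bisim_closed hc0 hc1 hb)⟩
  have h10 : HoweC (C.plug t1) (C.plug t0) :=
    ⟨hcp1, hcp0, howe_ctx C (howe_of_bisim_closed hc1 hc0 (bisim_symm hb))⟩
  exact ⟨⟨howeC_value_transfer h01, howeC_value_transfer h10⟩,
    ⟨howeC_stuck_transfer h01, howeC_stuck_transfer h10⟩⟩
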